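/- Let λ, μ ∈ ℝ with μ > 0 and 2μ + nλ > 0. Then the quadratic form E ↦ (2λμ/(λ+2μ))(tr E)² + 2μ|E|² is positive definite on the space of (n-1)×(n-1) real symmetric matrices. -/

import Mathlib

open Matrix BigOperators

/-- With `μ > 0` and `2μ + nλ > 0` (ambient dimension `n+1` here, so the condition reads
`2μ + (n+1)λ > 0`), the reduced quadratic form
`E ↦ (2λμ/(λ+2μ))(tr E)² + 2μ|E|²` is positive definite on symmetric `n×n` matrices. -/
theorem stmt1 (n : ℕ) (lam mu : ℝ) (hmu : 0 < mu) (h : 0 < 2 * mu + (n + 1 : ℝ) * lam) :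
    ∀ E : Matrix (Fin n) (Fin n) ℝ, Eᵀ = E → E ≠ 0 →
      0 < 2 * lam * mu / (lam + 2 * mu) * E.trace ^ 2
          + 2 * mu * ∑ i, ∑ j, (E i j) ^ 2 := by
  intro E _ hE0
  -- λ + 2μ > 0
  have hl2m : 0 < lam + 2 * mu := by
    rcases le_or_gt 0 lam with hl | hl
    · linarith
    · have : (n + 1 : ℝ) * lam ≤ 1 * lam := by
        apply mul_le_mul_of_nonpos_right _ hl.le
        have hn : (0:ℝ) ≤ (n : ℝ) := Nat.cast_nonneg n
        linarith [Nat.cast_nonneg (α := ℝ) n]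
      linarith
  -- |E|² > 0
  obtain ⟨i, j, hij⟩ : ∃ i j, E i j ≠ 0 := by
    by_contra hc
    push_neg at hc
    exact hE0 (by ext i j; simp [hc])
  have hS : 0 < ∑ i, ∑ j, (E i j) ^ 2 := by
    have hmem : i ∈ (Finset.univ : Finset (Fin n)) := Finset.mem_univ i
    refine Finset.sum_pos' (fun k _ => Finset.sum_nonneg fun l _ => sq_nonneg _) ⟨i, hmem, ?_⟩
    refine Finset.sum_pos' (fun l _ => sq_nonneg _) ⟨j, Finset.mem_univ j, pow_pos (abs_pos.mpr hij) 2 |>.trans_eq (by rw [sq_abs])⟩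
  -- Cauchy–Schwarz: (tr E)² ≤ n * ∑∑ E i j ²
  have htr : E.trace ^ 2 ≤ (n : ℝ) * ∑ i, ∑ j, (E i j) ^ 2 := by
    have h1 : E.trace ^ 2 ≤ (n : ℝ) * ∑ i, (E i i) ^ 2 := by
      have := sq_sum_le_card_mul_sum_sq (s := (Finset.univ : Finset (Fin n)))
        (f := fun i => E i i)
      simpa [Matrix.trace, Matrix.diag] using this
    have h2 : ∑ i, (E i i) ^ 2 ≤ ∑ i, ∑ j, (E i j) ^ 2 := by
      apply Finset.sum_le_sum
      intro i _
      exact Finset.single_le_sum (f := fun j => (E i j) ^ 2)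
        (fun j _ => sq_nonneg _) (Finset.mem_univ i)
    calc E.trace ^ 2 ≤ (n : ℝ) * ∑ i, (E i i) ^ 2 := h1
      _ ≤ (n : ℝ) * ∑ i, ∑ j, (E i j) ^ 2 :=
        mul_le_mul_of_nonneg_left h2 (Nat.cast_nonneg n)
  set c := 2 * lam * mu / (lam + 2 * mu) with hc
  rcases le_or_gt 0 c with hcpos | hcneg
  · have : 0 ≤ c * E.trace ^ 2 := mul_nonneg hcpos (sq_nonneg _)
    nlinarith
  · -- c < 0, so c * tr² ≥ c * n * |E|²
    have hcn : c * E.trace ^ 2 ≥ c * ((n : ℝ) * ∑ i, ∑ j, (E i j) ^ 2) :=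
      mul_le_mul_of_nonpos_left htr hcneg.le
    have key : 0 < c * (n : ℝ) + 2 * mu := by
      have : c * (n : ℝ) + 2 * mu = 2 * mu * (2 * mu + (n + 1 : ℝ) * lam) / (lam + 2 * mu) := by
        rw [hc]
        field_simp
        ring
      rw [this]
      positivity
    nlinarith
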